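/- PG(3,2) has exactly 56 spreads, where a spread is a partition of the 15 points into 5 lines. -/
import Mathlib


/-- A line of PG(3,2): the set {u, v, u+v} for distinct nonzero vectors u, v of F_2^4. -/
def PGLine (L : Finset (Fin 4 → ZMod 2)) : Prop :=
  ∃ u v : Fin 4 → ZMod 2, u ≠ 0 ∧ v ≠ 0 ∧ u ≠ v ∧ L = {u, v, u + v}

/-- A spread: 5 pairwise disjoint lines covering all 15 nonzero vectors. -/
def IsSpread (S : Finset (Finset (Fin 4 → ZMod 2))) : Prop :=
  S.card = 5 ∧ (∀ L ∈ S, PGLine L) ∧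
    (∀ L ∈ S, ∀ L' ∈ S, L ≠ L' → Disjoint L L') ∧
    ∀ x : Fin 4 → ZMod 2, x ≠ 0 → ∃ L ∈ S, x ∈ L

/-! ### Auxiliary: transfer to `Fin 16` and a finite computation -/

def lines35N : Finset (Finset (Fin 16)) := {
{1, 2, 3},
{1, 4, 5},
{1, 6, 7},
{1, 8, 9},
{1, 10, 11},
{1, 12, 13},
{1, 14, 15},
{2, 4, 6},
{2, 5, 7},
{2, 8, 10},
{2, 9, 11},
{2, 12, 14},
{2, 13, 15},
{3, 4, 7},
{3, 5, 6},
{3, 8, 11},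
{3, 9, 10},
{3, 12, 15},
{3, 13, 14},
{4, 8, 12},
{4, 9, 13},
{4, 10, 14},
{4, 11, 15},
{5, 8, 13},
{5, 9, 12},
{5, 10, 15},
{5, 11, 14},
{6, 8, 14},
{6, 9, 15},
{6, 10, 12},
{6, 11, 13},
{7, 8, 15},
{7, 9, 14},
{7, 10, 13},
{7, 11, 12}}

def xor16 (a b : Fin 16) : Fin 16 := ⟨a.val ^^^ b.val, Nat.xor_lt_two_pow (n := 4) a.isLt b.isLt⟩

def PGLineN (M : Finset (Fin 16)) : Prop :=
  ∃ a b : Fin 16, a ≠ 0 ∧ b ≠ 0 ∧ a ≠ b ∧ M = {a, b, xor16 a b}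

instance : DecidablePred PGLineN := fun M => by unfold PGLineN; infer_instance

def enc (v : Fin 4 → ZMod 2) : Fin 16 :=
  ⟨(v 0).val + 2 * (v 1).val + 4 * (v 2).val + 8 * (v 3).val, by
    have h0 := ZMod.val_lt (v 0); have h1 := ZMod.val_lt (v 1)
    have h2 := ZMod.val_lt (v 2); have h3 := ZMod.val_lt (v 3)
    omega⟩

def dec (a : Fin 16) : Fin 4 → ZMod 2 := fun i => ((a.val / 2 ^ i.val) % 2 : ℕ)

def e : (Fin 4 → ZMod 2) ≃ Fin 16 where
  toFun := enc
  invFun := dec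
  left_inv := by decide
  right_inv := by decide

lemma e_apply (x : Fin 4 → ZMod 2) : e x = enc x := rfl

lemma enc_add : ∀ u v, enc (u + v) = xor16 (enc u) (enc v) := by decide

lemma enc_zero : enc 0 = 0 := by decide

def nxt (c : Finset (Finset (Fin 16))) (L : Finset (Fin 16)) : Finset (Finset (Fin 16)) :=
  c.filter fun M => Disjoint M L

def spreadsN : Finset (Finset (Finset (Fin 16))) :=
  (lines35N.filter (fun L => (1 : Fin 16) ∈ L)).biUnion fun L1 =>
    (nxt lines35N L1).biUnion fun L2 =>
      (nxt (nxt lines35N L1) L2).biUnion fun L3 =>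
        (nxt (nxt (nxt lines35N L1) L2) L3).biUnion fun L4 =>
          (nxt (nxt (nxt (nxt lines35N L1) L2) L3) L4).image
            fun L5 => {L1, L2, L3, L4, L5}

set_option maxRecDepth 10000 in
set_option maxHeartbeats 4000000 in
lemma spreadsN_card : spreadsN.card = 56 := by decide

lemma lines_facts : lines35N.filter (fun M => M.card = 3 ∧ (0 : Fin 16) ∉ M) = lines35N := by
  decide

set_option maxRecDepth 10000 in
set_option maxHeartbeats 2000000 in
lemma lines_pgline : lines35N.filter PGLineN = lines35N := by decide

set_option maxRecDepth 40000 in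
lemma mk_mem_lines : ∀ a b : Fin 16, a ≠ 0 → b ≠ 0 → a ≠ b →
    ({a, b, xor16 a b} : Finset (Fin 16)) ∈ lines35N := by decide

lemma line_card3 {M : Finset (Fin 16)} (h : M ∈ lines35N) : M.card = 3 := by
  rw [← lines_facts] at h; exact (Finset.mem_filter.mp h).2.1

lemma line_zero {M : Finset (Fin 16)} (h : M ∈ lines35N) : (0 : Fin 16) ∉ M := by
  rw [← lines_facts] at h; exact (Finset.mem_filter.mp h).2.2

lemma line_pglineN {M : Finset (Fin 16)} (h : M ∈ lines35N) : PGLineN M := by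
  rw [← lines_pgline] at h; exact (Finset.mem_filter.mp h).2

lemma pglineN_iff {M : Finset (Fin 16)} : PGLineN M ↔ M ∈ lines35N := by
  constructor
  · rintro ⟨a, b, ha, hb, hab, rfl⟩; exact mk_mem_lines a b ha hb hab
  · exact line_pglineN

/-- The finset equiv induced by `e`. -/
def E : Finset (Fin 4 → ZMod 2) ≃ Finset (Fin 16) := e.finsetCongr

lemma E_tripleton (u v w : Fin 4 → ZMod 2) :
    E {u, v, w} = {e u, e v, e w} := by
  simp [E, Equiv.finsetCongr_apply, Finset.map_insert, Finset.map_singleton]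

lemma e_ne_zero {x : Fin 4 → ZMod 2} (hx : x ≠ 0) : e x ≠ 0 := by
  intro h
  apply hx
  have : e x = e 0 := by rw [h, e_apply, enc_zero]
  exact e.injective this

lemma pgline_iff (L : Finset (Fin 4 → ZMod 2)) : PGLine L ↔ PGLineN (E L) := by
  constructor
  · rintro ⟨u, v, hu, hv, huv, rfl⟩
    refine ⟨e u, e v, e_ne_zero hu, e_ne_zero hv, fun h => huv (e.injective h), ?_⟩
    rw [E_tripleton, show e (u + v) = xor16 (e u) (e v) from enc_add u v]
  · rintro ⟨a, b, ha, hb, hab, hM⟩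
    refine ⟨e.symm a, e.symm b, ?_, ?_, ?_, ?_⟩
    · intro h; apply ha
      rw [← e.apply_symm_apply a, h, e_apply, enc_zero]
    · intro h; apply hb
      rw [← e.apply_symm_apply b, h, e_apply, enc_zero]
    · intro h; exact hab (by rw [← e.apply_symm_apply a, ← e.apply_symm_apply b, h])
    · apply E.injective
      rw [hM, E_tripleton]
      rw [show e (e.symm a + e.symm b) = xor16 (e (e.symm a)) (e (e.symm b)) from
        enc_add (e.symm a) (e.symm b)]
      simp

/-- pairwise disjointness -/
def pdN (T : Finset (Finset (Fin 16))) : Prop :=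
  ∀ L ∈ T, ∀ L' ∈ T, L ≠ L' → Disjoint L L'

lemma disj_ne {M M' : Finset (Fin 16)} (hM : M ∈ lines35N) (h : Disjoint M M') : M ≠ M' := by
  intro hEq
  rw [← hEq] at h
  have hM3 := line_card3 hM
  have hME : M = ∅ := by simpa using disjoint_self.mp h
  rw [hME] at hM3
  simp at hM3

lemma coverN {T : Finset (Finset (Fin 16))} (hsub : T ⊆ lines35N) (hcard : T.card = 5)
    (hpd : pdN T) : ∀ a : Fin 16, a ≠ 0 → ∃ M ∈ T, a ∈ M := by
  have hU : ((T.biUnion fun M => M)).card = 15 := by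
    rw [Finset.card_biUnion (fun x hx y hy hxy => hpd x hx y hy hxy)]
    rw [Finset.sum_congr rfl (fun M hM => line_card3 (hsub hM))]
    simp [hcard]
  have hsubU : (T.biUnion fun M => M) ⊆ Finset.univ.erase 0 := by
    intro x hx
    obtain ⟨M, hM, hxM⟩ := Finset.mem_biUnion.mp hx
    exact Finset.mem_erase.mpr ⟨fun h => line_zero (hsub hM) (h ▸ hxM), Finset.mem_univ x⟩
  have hcard' : (Finset.univ.erase (0 : Fin 16)).card ≤ ((T.biUnion fun M => M)).card := by
    rw [hU, Finset.card_erase_of_mem (Finset.mem_univ 0)]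
    simp
  have heq := Finset.eq_of_subset_of_card_le hsubU hcard'
  intro a ha
  have : a ∈ (T.biUnion fun M => M) := by
    rw [heq]; exact Finset.mem_erase.mpr ⟨ha, Finset.mem_univ a⟩
  obtain ⟨M, hM, haM⟩ := Finset.mem_biUnion.mp this
  exact ⟨M, hM, haM⟩

lemma mem_spreadsN {T : Finset (Finset (Fin 16))} :
    T ∈ spreadsN ↔ T ⊆ lines35N ∧ T.card = 5 ∧ pdN T ∧ ∃ M ∈ T, (1 : Fin 16) ∈ M := by
  simp only [spreadsN, nxt, Finset.mem_biUnion, Finset.mem_filter, Finset.mem_image]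
  constructor
  · rintro ⟨L1, ⟨hL1, h1L1⟩, L2, ⟨hL2, d21⟩, L3, ⟨⟨hL3, d31⟩, d32⟩, L4, ⟨⟨⟨hL4, d41⟩, d42⟩, d43⟩,
      L5, ⟨⟨⟨⟨hL5, d51⟩, d52⟩, d53⟩, d54⟩, rfl⟩
    have n21 := disj_ne hL2 d21
    have n31 := disj_ne hL3 d31
    have n32 := disj_ne hL3 d32
    have n41 := disj_ne hL4 d41
    have n42 := disj_ne hL4 d42
    have n43 := disj_ne hL4 d43
    have n51 := disj_ne hL5 d51
    have n52 := disj_ne hL5 d52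
    have n53 := disj_ne hL5 d53
    have n54 := disj_ne hL5 d54
    refine ⟨?_, ?_, ?_, ⟨L1, by simp, h1L1⟩⟩
    · intro M hM
      simp only [Finset.mem_insert, Finset.mem_singleton] at hM
      rcases hM with rfl | rfl | rfl | rfl | rfl <;> assumption
    · rw [Finset.card_insert_of_notMem (by simp [Ne.symm n21, Ne.symm n31, Ne.symm n41,
        Ne.symm n51]), Finset.card_insert_of_notMem (by simp [Ne.symm n32, Ne.symm n42,
        Ne.symm n52]), Finset.card_insert_of_notMem (by simp [Ne.symm n43, Ne.symm n53]),
        Finset.card_insert_of_notMem (by simp [Ne.symm n54]), Finset.card_singleton]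
    · intro M hM M' hM' hne
      simp only [Finset.mem_insert, Finset.mem_singleton] at hM hM'
      rcases hM with rfl | rfl | rfl | rfl | rfl <;>
        rcases hM' with rfl | rfl | rfl | rfl | rfl <;>
        first
          | exact absurd rfl hne
          | assumption
          | exact Disjoint.symm (by assumption)
  · rintro ⟨hsub, hcard, hpd, M1, hM1, h1M1⟩
    have hT : T = insert M1 (T.erase M1) := (Finset.insert_erase hM1).symm
    have hcard' : (T.erase M1).card = 4 := by
      rw [Finset.card_erase_of_mem hM1, hcard]
    obtain ⟨L2, t2, hL2t2, ht2ins, ht2card⟩ := Finset.card_eq_succ.mp hcard'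
    obtain ⟨a, b, c, hab, hac, hbc, ht2⟩ := Finset.card_eq_three.mp ht2card
    subst ht2
    -- memberships in T
    have hL2T : L2 ∈ T := Finset.mem_of_mem_erase (ht2ins ▸ Finset.mem_insert_self _ _)
    have haT : a ∈ T := Finset.mem_of_mem_erase (ht2ins ▸ (by simp : a ∈ insert L2 {a, b, c}))
    have hbT : b ∈ T := Finset.mem_of_mem_erase (ht2ins ▸ (by simp : b ∈ insert L2 {a, b, c}))
    have hcT : c ∈ T := Finset.mem_of_mem_erase (ht2ins ▸ (by simp : c ∈ insert L2 {a, b, c}))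
    -- inequalities
    have hL2M1 : L2 ≠ M1 := Finset.ne_of_mem_erase (ht2ins ▸ Finset.mem_insert_self _ _)
    have haM1 : a ≠ M1 := Finset.ne_of_mem_erase (ht2ins ▸ (by simp : a ∈ insert L2 {a, b, c}))
    have hbM1 : b ≠ M1 := Finset.ne_of_mem_erase (ht2ins ▸ (by simp : b ∈ insert L2 {a, b, c}))
    have hcM1 : c ≠ M1 := Finset.ne_of_mem_erase (ht2ins ▸ (by simp : c ∈ insert L2 {a, b, c}))
    have haL2 : a ≠ L2 := by rintro rfl; exact hL2t2 (by simp)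
    have hbL2 : b ≠ L2 := by rintro rfl; exact hL2t2 (by simp)
    have hcL2 : c ≠ L2 := by rintro rfl; exact hL2t2 (by simp)
    refine ⟨M1, ⟨hsub hM1, h1M1⟩, L2, ⟨hsub hL2T, hpd _ hL2T _ hM1 hL2M1⟩,
      a, ⟨⟨hsub haT, hpd _ haT _ hM1 haM1⟩, hpd _ haT _ hL2T haL2⟩,
      b, ⟨⟨⟨hsub hbT, hpd _ hbT _ hM1 hbM1⟩, hpd _ hbT _ hL2T hbL2⟩, hpd _ hbT _ haT (Ne.symm hab)⟩,
      c, ⟨⟨⟨⟨hsub hcT, hpd _ hcT _ hM1 hcM1⟩, hpd _ hcT _ hL2T hcL2⟩, hpd _ hcT _ haT (Ne.symm hac)⟩,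
        hpd _ hcT _ hbT (Ne.symm hbc)⟩, ?_⟩
    rw [hT, ← ht2ins]

/-- The equiv on sets of lines. -/
def E2 : Finset (Finset (Fin 4 → ZMod 2)) ≃ Finset (Finset (Fin 16)) := E.finsetCongr

lemma mem_E2 {S : Finset (Finset (Fin 4 → ZMod 2))} {M : Finset (Fin 16)} :
    M ∈ E2 S ↔ E.symm M ∈ S := by
  simp [E2, Equiv.finsetCongr_apply, Finset.mem_map_equiv]

lemma mem_E2' {S : Finset (Finset (Fin 4 → ZMod 2))} {L : Finset (Fin 4 → ZMod 2)} :
    E L ∈ E2 S ↔ L ∈ S := by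
  rw [mem_E2, Equiv.symm_apply_apply]

lemma disjoint_E {L L' : Finset (Fin 4 → ZMod 2)} : Disjoint (E L) (E L') ↔ Disjoint L L' := by
  simp [E, Equiv.finsetCongr_apply, Finset.disjoint_map]

lemma mem_E {x : Fin 4 → ZMod 2} {L : Finset (Fin 4 → ZMod 2)} : e x ∈ E L ↔ x ∈ L := by
  simp [E, Equiv.finsetCongr_apply, Finset.mem_map_equiv]

lemma key (S : Finset (Finset (Fin 4 → ZMod 2))) : IsSpread S ↔ E2 S ∈ spreadsN := by
  rw [mem_spreadsN]
  constructor
  · rintro ⟨hcard, hlines, hdisj, hcover⟩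
    refine ⟨?_, ?_, ?_, ?_⟩
    · intro M hM
      obtain ⟨L, hL⟩ := E.surjective M
      subst hL
      rw [mem_E2'] at hM
      exact pglineN_iff.mp ((pgline_iff L).mp (hlines L hM))
    · rw [show (E2 S).card = S.card from Finset.card_map _, hcard]
    · intro M hM M' hM' hne
      obtain ⟨L, rfl⟩ := E.surjective M
      obtain ⟨L', rfl⟩ := E.surjective M'
      rw [mem_E2'] at hM hM'
      exact disjoint_E.mpr (hdisj L hM L' hM' (fun h => hne (h ▸ rfl)))
    · have hx : e.symm 1 ≠ 0 := by decide
      obtain ⟨L, hL, hxL⟩ := hcover (e.symm 1) hx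
      refine ⟨E L, mem_E2'.mpr hL, ?_⟩
      have := mem_E.mpr hxL
      rwa [e.apply_symm_apply] at this
  · rintro ⟨hsub, hcard, hpd, -⟩
    refine ⟨?_, ?_, ?_, ?_⟩
    · rw [← show (E2 S).card = S.card from Finset.card_map _, hcard]
    · intro L hL
      exact (pgline_iff L).mpr (line_pglineN (hsub (mem_E2'.mpr hL)))
    · intro L hL L' hL' hne
      exact disjoint_E.mp (hpd _ (mem_E2'.mpr hL) _ (mem_E2'.mpr hL')
        (fun h => hne (E.injective h)))
    · intro x hx
      obtain ⟨M, hM, haM⟩ := coverN hsub hcard hpd (e x) (e_ne_zero hx)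
      obtain ⟨L, rfl⟩ := E.surjective M
      exact ⟨L, mem_E2'.mp hM, mem_E.mp haM⟩

/-- PG(3,2) has exactly 56 spreads. -/
theorem card_spreads : Nat.card {S // IsSpread S} = 56 := by
  rw [Nat.card_congr (Equiv.subtypeEquiv E2 key)]
  rw [Nat.card_eq_fintype_card, Fintype.card_coe]
  exact spreadsN_card
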